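/- arXiv:0709.0139 — 3 statements merged into one kernel-verified Lean document; each statement's English description precedes it below -/
import Mathlib

section
/- The function B(δ) = -Γ(-1-2δ) cos(π(1/2+δ)) 2^{2δ+1} π^{2δ-1} defined for δ ∈ (0, 1/2) satisfies lim_{δ→0+} B(δ) = 1. -/
open Real Filter Topology

noncomputable def biasConst (δ : ℝ) : ℝ :=
  -Real.Gamma (-1 - 2 * δ) * Real.cos (π * (1/2 + δ)) * 2 ^ (2 * δ + 1) * π ^ (2 * δ - 1)

lemma sin_div_tendsto : Tendsto (fun δ : ℝ => Real.sin (π * δ) / δ) (nhdsWithin 0 (Set.Ioi 0)) (nhds π) := by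
  have h1 : Tendsto (fun x : ℝ => Real.sin x / x) (nhdsWithin 0 {(0:ℝ)}ᶜ) (nhds 1) := by
    have h := hasDerivAt_iff_tendsto_slope.mp (Real.hasDerivAt_sin 0)
    rw [Real.cos_zero] at h
    apply h.congr
    intro x
    simp [slope_def_field]
  have h2 : Tendsto (fun δ : ℝ => π * δ) (nhdsWithin 0 (Set.Ioi 0)) (nhdsWithin 0 {(0:ℝ)}ᶜ) := by
    apply tendsto_nhdsWithin_of_tendsto_nhds_of_eventually_within
    · apply tendsto_nhdsWithin_of_tendsto_nhds
      simpa using (show Continuous (fun δ : ℝ => π * δ) from continuous_const.mul continuous_id).tendsto' 0 0 (by simp)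
    · filter_upwards [self_mem_nhdsWithin] with δ hδ
      have h0 : (0:ℝ) < δ := hδ
      have := Real.pi_pos
      simp only [Set.mem_compl_iff, Set.mem_singleton_iff]
      positivity
  have h3 : Tendsto (fun δ : ℝ => Real.sin (π * δ) / (π * δ)) (nhdsWithin 0 (Set.Ioi 0)) (nhds 1) :=
    h1.comp h2
  have h4 := h3.const_mul π
  rw [mul_one] at h4
  apply h4.congr'
  filter_upwards [self_mem_nhdsWithin] with δ hδ
  have hδ0 : δ ≠ 0 := ne_of_gt hδ
  field_simp

theorem biasConst_tendsto_one :
    Tendsto biasConst (nhdsWithin 0 (Set.Ioi 0)) (nhds 1) := by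
  have pi_pos := Real.pi_pos
  -- the rewritten form
  have key : ∀ δ ∈ Set.Ioi (0:ℝ), biasConst δ =
      Real.Gamma (1 - 2 * δ) * (Real.sin (π * δ) / δ) / (2 * (1 + 2 * δ)) *
        2 ^ (2 * δ + 1) * π ^ (2 * δ - 1) := by
    intro δ hδ
    have hδ0 : (0:ℝ) < δ := hδ
    have h1 : (-2 * δ : ℝ) ≠ 0 := by nlinarith
    have h2 : (-1 - 2 * δ : ℝ) ≠ 0 := by nlinarith
    have e1 : Real.Gamma (-2 * δ + 1) = (-2 * δ) * Real.Gamma (-2 * δ) :=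
      Real.Gamma_add_one h1
    have e2 : Real.Gamma ((-1 - 2 * δ) + 1) = (-1 - 2 * δ) * Real.Gamma (-1 - 2 * δ) :=
      Real.Gamma_add_one h2
    have e3 : ((-1 - 2 * δ) + 1 : ℝ) = -2 * δ := by ring
    rw [e3] at e2
    have e4 : (-2 * δ + 1 : ℝ) = 1 - 2 * δ := by ring
    rw [e4] at e1
    have hg : Real.Gamma (-1 - 2 * δ) = Real.Gamma (1 - 2 * δ) / ((-2 * δ) * (-1 - 2 * δ)) := by
      rw [e2] at e1
      field_simp
      linarith [e1]
    have hc : Real.cos (π * (1/2 + δ)) = -Real.sin (π * δ) := by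
      have : π * (1/2 + δ) = π / 2 + π * δ := by ring
      rw [this, Real.cos_add, Real.cos_pi_div_two, Real.sin_pi_div_two]
      ring
    rw [biasConst, hg, hc]
    have hne : ((-2 * δ) * (-1 - 2 * δ) : ℝ) ≠ 0 := mul_ne_zero h1 h2
    field_simp
    ring
  have hG : Tendsto (fun δ : ℝ => Real.Gamma (1 - 2 * δ)) (nhdsWithin 0 (Set.Ioi 0)) (nhds 1) := by
    have hc : ContinuousAt Real.Gamma 1 := by
      refine (Real.differentiableAt_Gamma fun m => ?_).continuousAt
      intro h
      have : (0:ℝ) ≤ m := Nat.cast_nonneg m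
      nlinarith
    have : Tendsto (fun δ : ℝ => 1 - 2 * δ) (nhdsWithin 0 (Set.Ioi 0)) (nhds 1) := by
      apply tendsto_nhdsWithin_of_tendsto_nhds
      simpa using ((show Continuous (fun δ : ℝ => 1 - 2 * δ) from continuous_const.sub (continuous_const.mul continuous_id)).tendsto' 0 1 (by simp))
    simpa [Real.Gamma_one, Function.comp_def] using (hc.tendsto.comp this)
  have hdiv : Tendsto (fun δ : ℝ => 2 * (1 + 2 * δ)) (nhdsWithin 0 (Set.Ioi 0)) (nhds 2) := by
    apply tendsto_nhdsWithin_of_tendsto_nhds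
    simpa using ((show Continuous (fun δ : ℝ => 2 * (1 + 2 * δ)) from continuous_const.mul (continuous_const.add (continuous_const.mul continuous_id))).tendsto' 0 2 (by norm_num))
  have h2p : Tendsto (fun δ : ℝ => (2:ℝ) ^ (2 * δ + 1)) (nhdsWithin 0 (Set.Ioi 0)) (nhds 2) := by
    apply tendsto_nhdsWithin_of_tendsto_nhds
    have : ContinuousAt (fun δ : ℝ => (2:ℝ) ^ (2 * δ + 1)) 0 := by
      exact (Real.continuousAt_const_rpow (by norm_num)).comp (by fun_prop)
    simpa using this.tendsto
  have hpp : Tendsto (fun δ : ℝ => π ^ (2 * δ - 1)) (nhdsWithin 0 (Set.Ioi 0)) (nhds (π ^ ((-1 : ℝ)))) := by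
    apply tendsto_nhdsWithin_of_tendsto_nhds
    have : ContinuousAt (fun δ : ℝ => π ^ (2 * δ - 1)) 0 := by
      exact (Real.continuousAt_const_rpow (ne_of_gt Real.pi_pos)).comp (by fun_prop)
    simpa using this.tendsto
  have hall : Tendsto (fun δ : ℝ => Real.Gamma (1 - 2 * δ) * (Real.sin (π * δ) / δ) / (2 * (1 + 2 * δ)) *
        2 ^ (2 * δ + 1) * π ^ (2 * δ - 1)) (nhdsWithin 0 (Set.Ioi 0))
      (nhds (1 * π / 2 * 2 * π ^ ((-1:ℝ)))) :=
    (((hG.mul sin_div_tendsto).div hdiv (by norm_num)).mul h2p).mul hpp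
  have hval : (1 * π / 2 * 2 * π ^ ((-1:ℝ)) : ℝ) = 1 := by
    rw [Real.rpow_neg_one]
    field_simp
  rw [hval] at hall
  exact hall.congr' (by filter_upwards [self_mem_nhdsWithin] with δ hδ; exact (key δ hδ).symm)
end

section
/- The function B(δ) = -Γ(-1-2δ) cos(π(1/2+δ)) 2^{2δ+1} π^{2δ-1} is strictly positive and monotonically increasing on (0, 1/2), and is bounded away from zero on any interval [a, 1/2) with 0 < a < 1/2. -/
open Real Set

lemma biasConst_eq {δ : ℝ} (h1 : 0 < δ) (h2 : δ < 1/2) :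
    biasConst δ = (2*π) ^ (2*δ) / (Real.cos (π*δ) * Real.Gamma (2+2*δ)) := by
  have hπ := Real.pi_pos
  have hsπ : Real.sin (π*δ) > 0 := Real.sin_pos_of_pos_of_lt_pi (by positivity) (by nlinarith)
  have hcπ : Real.cos (π*δ) > 0 := Real.cos_pos_of_mem_Ioo ⟨by nlinarith, by nlinarith⟩
  have hΓ : Real.Gamma (2+2*δ) > 0 := Real.Gamma_pos_of_pos (by linarith)
  have hrefl := Real.Gamma_mul_Gamma_one_sub (-1-2*δ)
  have he1 : (1:ℝ) - (-1-2*δ) = 2+2*δ := by ring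
  have he2 : Real.sin (π * (-1-2*δ)) = Real.sin (2*(π*δ)) := by
    rw [show π * (-1-2*δ) = -(π + 2*(π*δ)) by ring, Real.sin_neg, Real.sin_add]
    simp
  rw [he1, he2, Real.sin_two_mul] at hrefl
  have hcos : Real.cos (π * (1/2+δ)) = -Real.sin (π*δ) := by
    rw [show π * (1/2+δ) = π/2 + π*δ by ring, Real.cos_add]
    simp
  have hG : Real.Gamma (-1-2*δ) = π / (2 * Real.sin (π*δ) * Real.cos (π*δ) * Real.Gamma (2+2*δ)) := by
    field_simp at hrefl ⊢
    nlinarith [hrefl]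
  have hp1 : (2:ℝ) ^ (2*δ+1) = 2 ^ (2*δ) * 2 := by
    rw [Real.rpow_add (by norm_num), Real.rpow_one]
  have hp2 : π ^ (2*δ-1) = π ^ (2*δ) / π := by
    rw [Real.rpow_sub hπ, Real.rpow_one]
  have hp3 : (2*π) ^ (2*δ) = 2 ^ (2*δ) * π ^ (2*δ) :=
    Real.mul_rpow (by norm_num) hπ.le
  rw [biasConst, hG, hcos, hp1, hp2, hp3]
  field_simp

lemma gamma_slope {x1 x2 : ℝ} (h1 : 2 ≤ x1) (h12 : x1 < x2) (h2 : x2 < 3) :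
    Real.log (Real.Gamma x2) - Real.log (Real.Gamma x1) ≤ (x2 - x1) * Real.log 3 := by
  have hc := Real.convexOn_log_Gamma
  have m1 : x1 ∈ Ioi (0:ℝ) := by simp; linarith
  have m3 : (3:ℝ) ∈ Ioi (0:ℝ) := by norm_num
  have m4 : (4:ℝ) ∈ Ioi (0:ℝ) := by norm_num
  have s1 := hc.slope_mono_adjacent m1 m3 h12 h2
  have s2 := hc.slope_mono_adjacent (by simp; linarith : x2 ∈ Ioi (0:ℝ)) m4 h2 (by norm_num)
  have hΓ3 : Real.Gamma 3 = 2 := by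
    rw [show (3:ℝ) = 2 + 1 by norm_num, Real.Gamma_add_one (by norm_num),
      show (2:ℝ) = 1 + 1 by norm_num, Real.Gamma_add_one (by norm_num), Real.Gamma_one]
    norm_num
  have hΓ4 : Real.Gamma 4 = 6 := by
    rw [show (4:ℝ) = 3 + 1 by norm_num, Real.Gamma_add_one (by norm_num), hΓ3]
    norm_num
  simp only [Function.comp] at s1 s2
  rw [hΓ3] at s1
  rw [hΓ3, hΓ4] at s2
  have hlog : Real.log 6 - Real.log 2 = Real.log 3 := by
    rw [show (6:ℝ) = 2 * 3 by norm_num, Real.log_mul (by norm_num) (by norm_num)]; ring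
  have s2' : (Real.log (Real.Gamma x2) - Real.log (Real.Gamma x1)) / (x2 - x1) ≤ Real.log 3 := by
    calc _ ≤ (Real.log 2 - Real.log (Real.Gamma x2)) / (3 - x2) := s1
    _ ≤ (Real.log 6 - Real.log 2) / (4 - 3) := s2
    _ = Real.log 3 := by rw [hlog]; norm_num
  have := (div_le_iff₀ (by linarith : (0:ℝ) < x2 - x1)).mp s2'
  linarith

theorem biasConst_pos_strictMono_bddBelow :
    (∀ δ ∈ Ioo (0:ℝ) (1/2), 0 < biasConst δ) ∧
    StrictMonoOn biasConst (Ioo (0:ℝ) (1/2)) ∧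
    (∀ a : ℝ, 0 < a → a < 1/2 → ∃ c : ℝ, 0 < c ∧ ∀ δ ∈ Ico a (1/2:ℝ), c ≤ biasConst δ) := by
  have hπ := Real.pi_pos
  have hπ3 := Real.pi_gt_three
  have hpos : ∀ δ ∈ Ioo (0:ℝ) (1/2), 0 < biasConst δ := by
    rintro δ ⟨h1, h2⟩
    rw [biasConst_eq h1 h2]
    have hc : Real.cos (π*δ) > 0 := Real.cos_pos_of_mem_Ioo ⟨by nlinarith, by nlinarith⟩
    have hΓ : Real.Gamma (2+2*δ) > 0 := Real.Gamma_pos_of_pos (by linarith)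
    positivity
  have hmono : StrictMonoOn biasConst (Ioo (0:ℝ) (1/2)) := by
    rintro δ1 ⟨h1a, h1b⟩ δ2 ⟨h2a, h2b⟩ h12
    rw [biasConst_eq h1a h1b, biasConst_eq h2a h2b]
    have hc1 : Real.cos (π*δ1) > 0 := Real.cos_pos_of_mem_Ioo ⟨by nlinarith, by nlinarith⟩
    have hc2 : Real.cos (π*δ2) > 0 := Real.cos_pos_of_mem_Ioo ⟨by nlinarith, by nlinarith⟩
    have hcle : Real.cos (π*δ2) ≤ Real.cos (π*δ1) := by
      apply Real.cos_le_cos_of_nonneg_of_le_pi (by positivity) (by nlinarith) (by nlinarith)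
    have hΓ1 : Real.Gamma (2+2*δ1) > 0 := Real.Gamma_pos_of_pos (by linarith)
    have hΓ2 : Real.Gamma (2+2*δ2) > 0 := Real.Gamma_pos_of_pos (by linarith)
    have h2π : (1:ℝ) < 2*π := by linarith
    have hslope := gamma_slope (by linarith : (2:ℝ) ≤ 2+2*δ1)
      (by linarith : 2+2*δ1 < 2+2*δ2) (by linarith : 2+2*δ2 < 3)
    have hlt : Real.log (Real.Gamma (2+2*δ2)) <
        Real.log ((2*π) ^ (2*δ2 - 2*δ1) * Real.Gamma (2+2*δ1)) := by
      rw [Real.log_mul (by positivity) (by positivity), Real.log_rpow (by positivity)]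
      have hl3 : Real.log 3 < Real.log (2*π) := by
        apply Real.log_lt_log (by norm_num); linarith
      have : (2+2*δ2 - (2+2*δ1)) * Real.log 3 < (2*δ2 - 2*δ1) * Real.log (2*π) := by
        have h3pos : (0:ℝ) < Real.log 3 := Real.log_pos (by norm_num)
        nlinarith
      linarith [hslope]
    have hΓlt : Real.Gamma (2+2*δ2) < (2*π) ^ (2*δ2 - 2*δ1) * Real.Gamma (2+2*δ1) :=
      (Real.log_lt_log_iff hΓ2 (by positivity)).mp hlt
    rw [div_lt_div_iff₀ (by positivity) (by positivity)]
    have hkey : (2*π) ^ (2*δ1) * Real.Gamma (2+2*δ2) < (2*π) ^ (2*δ2) * Real.Gamma (2+2*δ1) := by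
      have hA1 : (0:ℝ) < (2*π) ^ (2*δ1) := by positivity
      have := mul_lt_mul_of_pos_left hΓlt hA1
      rwa [← mul_assoc, ← Real.rpow_add (by positivity), show 2*δ1 + (2*δ2-2*δ1) = 2*δ2 by ring]
        at this
    calc (2*π) ^ (2*δ1) * (Real.cos (π*δ2) * Real.Gamma (2+2*δ2))
        = Real.cos (π*δ2) * ((2*π) ^ (2*δ1) * Real.Gamma (2+2*δ2)) := by ring
      _ < Real.cos (π*δ2) * ((2*π) ^ (2*δ2) * Real.Gamma (2+2*δ1)) :=
          mul_lt_mul_of_pos_left hkey hc2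
      _ ≤ Real.cos (π*δ1) * ((2*π) ^ (2*δ2) * Real.Gamma (2+2*δ1)) :=
          mul_le_mul_of_nonneg_right hcle (by positivity)
      _ = (2*π) ^ (2*δ2) * (Real.cos (π*δ1) * Real.Gamma (2+2*δ1)) := by ring
  refine ⟨hpos, hmono, fun a ha ha' => ?_⟩
  refine ⟨biasConst a, hpos a ⟨ha, ha'⟩, fun δ ⟨hd1, hd2⟩ => ?_⟩
  rcases eq_or_lt_of_le hd1 with rfl | h
  · exact le_refl _
  · exact (hmono ⟨ha, ha'⟩ ⟨ha.trans h, hd2⟩ h).le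
end

section
/- The improper integral ∫_{-∞}^∞ [ (sin s - s cos s)² / s⁴ ] ds equals π/3. Equivalently, 2π ∫_{-∞}^∞ (sin s - s cos s)²/s⁴ ds = 2π²/3. -/
open Real MeasureTheory Set FourierTransform intervalIntegral Complex

noncomputable def Gfun (s : ℝ) : ℝ := (Real.sin s - s * Real.cos s) ^ 2 / s ^ 4

lemma num__root_.abs_le_cube {s : ℝ} (h0 : 0 ≤ s) (h1 : s ≤ 1) :
    |Real.sin s - s * Real.cos s| ≤ s ^ 3 := by
  rcases eq_or_lt_of_le h0 with rfl | hs
  · simp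
  rw [_root_.abs_le]
  constructor
  · have h2 : s - s ^ 3 / 4 < Real.sin s := by have := Real.sin_gt_sub_cube hs; nlinarith [pow_pos hs 3]
    have h3 : Real.cos s ≤ 1 := Real.cos_le_one s
    have h4 : s * Real.cos s ≤ s * 1 := mul_le_mul_of_nonneg_left h3 (le_of_lt hs)
    have h5 : 0 ≤ s ^ 3 := by positivity
    nlinarith
  · have h2 : Real.sin s ≤ s := Real.sin_le h0
    have h3 : 1 - s ^ 2 / 2 ≤ Real.cos s := Real.one_sub_sq_div_two_le_cos
    nlinarith

lemma num__root_.abs_le_cube' (s : ℝ) (h1 : |s| ≤ 1) :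
    |Real.sin s - s * Real.cos s| ≤ |s| ^ 3 := by
  rcases le_or_gt 0 s with h | h
  · rw [_root_.abs_of_nonneg h]
    exact num__root_.abs_le_cube h (by rwa [_root_.abs_of_nonneg h] at h1)
  · rw [_root_.abs_of_neg h]
    have := num__root_.abs_le_cube (s := -s) (by linarith) (by rwa [_root_.abs_of_neg h] at h1)
    rw [show Real.sin (-s) - -s * Real.cos (-s) = -(Real.sin s - s * Real.cos s) by
      rw [Real.sin_neg, Real.cos_neg]; ring, _root_.abs_neg] at this
    exact this

lemma Gfun_nonneg (s : ℝ) : 0 ≤ Gfun s := by unfold Gfun; positivity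

lemma Gfun_le (s : ℝ) : Gfun s ≤ 8 / (1 + s ^ 2) := by
  rcases eq_or_ne s 0 with rfl | hs
  · simp only [Gfun]; norm_num
  have hs4 : (0 : ℝ) < s ^ 4 := by positivity
  have h1s : (0 : ℝ) < 1 + s ^ 2 := by positivity
  rw [Gfun, div_le_div_iff₀ hs4 h1s]
  rcases le_or_gt (|s|) 1 with h | h
  · have hN := num__root_.abs_le_cube' s h
    have hN2 : (Real.sin s - s * Real.cos s) ^ 2 ≤ s ^ 6 := by
      have := sq_le_sq' (neg_le_of_abs_le (by simpa using hN)) (le_of_abs_le hN)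
      calc (Real.sin s - s * Real.cos s) ^ 2 ≤ (|s| ^ 3) ^ 2 := by
            rw [← _root_.sq_abs]; exact pow_le_pow_left₀ (_root_.abs_nonneg _) hN 2
        _ = s ^ 6 := by rw [← _root_.abs_pow, _root_.sq_abs]; ring
    have hs2 : s ^ 2 ≤ 1 := by
      have := _root_.abs_le.mp h; nlinarith
    nlinarith [sq_nonneg s, sq_nonneg (s^2), sq_nonneg (s^3)]
  · have hN : |Real.sin s - s * Real.cos s| ≤ 2 * |s| := by
      have h1 : |Real.sin s| ≤ 1 := Real.abs_sin_le_one s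
      have h2 : |s * Real.cos s| ≤ |s| := by
        rw [_root_.abs_mul]
        nlinarith [Real.abs_cos_le_one s, _root_.abs_nonneg s]
      calc |Real.sin s - s * Real.cos s| ≤ |Real.sin s| + |s * Real.cos s| := _root_.abs_sub _ _
        _ ≤ 2 * |s| := by nlinarith
    have hN2 : (Real.sin s - s * Real.cos s) ^ 2 ≤ 4 * s ^ 2 := by
      rw [← _root_.sq_abs]
      nlinarith [_root_.abs_nonneg (Real.sin s - s * Real.cos s), _root_.sq_abs s]
    have hs2 : 1 ≤ s ^ 2 := by nlinarith [_root_.sq_abs s]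
    nlinarith [sq_nonneg s, sq_nonneg (s^2 - 1)]

lemma Gfun_measurable : Measurable Gfun := by
  have h1 : Continuous fun s : ℝ => (Real.sin s - s * Real.cos s) ^ 2 := by continuity
  exact h1.measurable.div ((continuous_pow 4).measurable)

lemma Gfun_integrable : Integrable Gfun := by
  have hmaj : Integrable (fun s : ℝ => 8 / (1 + s ^ 2)) := by
    simpa [div_eq_mul_inv] using integrable_inv_one_add_sq.const_mul 8
  refine hmaj.mono Gfun_measurable.aestronglyMeasurable (ae_of_all _ fun s => ?_)
  rw [Real.norm_eq_abs, Real.norm_eq_abs, _root_.abs_of_nonneg (Gfun_nonneg s),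
    _root_.abs_of_nonneg (by positivity)]
  exact Gfun_le s

noncomputable def kfun (x : ℝ) : ℝ := if |x| ≤ 2 then (|x| ^ 3 - 6 * |x| + 4) / 6 else 0

lemma kfun_cont : Continuous kfun := by
  apply Continuous.if_le
  · fun_prop
  · exact continuous_const
  · exact continuous_abs
  · exact continuous_const
  · intro x hx; rw [hx]; norm_num

lemma kfun_supp : HasCompactSupport kfun := by
  apply HasCompactSupport.intro (isCompact_Icc (a := (-2:ℝ)) (b := 2))
  intro x hx
  rw [kfun, if_neg]
  intro h
  exact hx (by rw [Set.mem_Icc]; exact abs_le.mp h)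

lemma kfun_even (x : ℝ) : kfun (-x) = kfun x := by simp [kfun]

lemma kfun_zero : kfun 0 = 2 / 3 := by norm_num [kfun]

-- the unscaled cosine integral
lemma cos_int (c : ℝ) (hc : c ≠ 0) :
    ∫ x in (0:ℝ)..2, (x ^ 3 - 6 * x + 4) * Real.cos (c * x) =
      6 * Real.cos (2 * c) / c ^ 2 - 12 * Real.sin (2 * c) / c ^ 3
        - 6 * Real.cos (2 * c) / c ^ 4 + 6 / c ^ 2 + 6 / c ^ 4 := by
  have hderiv : ∀ x ∈ Set.uIcc (0:ℝ) 2, HasDerivAt (fun x : ℝ =>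
      (x ^ 3 - 6 * x + 4) * Real.sin (c * x) / c + (3 * x ^ 2 - 6) * Real.cos (c * x) / c ^ 2
        - 6 * x * Real.sin (c * x) / c ^ 3 - 6 * Real.cos (c * x) / c ^ 4)
      ((x ^ 3 - 6 * x + 4) * Real.cos (c * x)) x := by
    intro x _
    have hs : HasDerivAt (fun x : ℝ => Real.sin (c * x)) (Real.cos (c * x) * c) x := by
      simpa [Function.comp_def] using (Real.hasDerivAt_sin (c * x)).comp x ((hasDerivAt_id x).const_mul c)
    have hcos : HasDerivAt (fun x : ℝ => Real.cos (c * x)) (-Real.sin (c * x) * c) x := by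
      simpa [Function.comp_def] using (Real.hasDerivAt_cos (c * x)).comp x ((hasDerivAt_id x).const_mul c)
    have hp1 : HasDerivAt (fun x : ℝ => x ^ 3 - 6 * x + 4) (3 * x ^ 2 - 6) x := by
      have := ((hasDerivAt_pow 3 x).sub ((hasDerivAt_id x).const_mul 6)).add_const 4
      simpa using this
    have hp2 : HasDerivAt (fun x : ℝ => 3 * x ^ 2 - 6) (6 * x) x := by
      have := ((hasDerivAt_pow 2 x).const_mul 3).sub_const 6
      refine this.congr_deriv ?_
      norm_num
      ring
    have hp3 : HasDerivAt (fun x : ℝ => 6 * x) 6 x := by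
      simpa using (hasDerivAt_id x).const_mul 6
    have H := (((hp1.mul hs).div_const c).add ((hp2.mul hcos).div_const (c ^ 2))).sub
        (((hp3.mul hs).div_const (c ^ 3))) |>.sub ((hcos.const_mul 6).div_const (c ^ 4))
    refine H.congr_deriv ?_
    field_simp
    ring
  rw [intervalIntegral.integral_eq_sub_of_hasDerivAt hderiv ((Continuous.intervalIntegrable (by continuity)) 0 2)]
  norm_num
  field_simp
  ring

lemma poly_int :
    ∫ x in (0:ℝ)..2, (x ^ 3 - 6 * x + 4) = 0 := by
  have hderiv : ∀ x ∈ Set.uIcc (0:ℝ) 2, HasDerivAt (fun x : ℝ => x ^ 4 / 4 - 3 * x ^ 2 + 4 * x)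
      (x ^ 3 - 6 * x + 4) x := by
    intro x _
    have := (((hasDerivAt_pow 4 x).div_const 4).sub ((hasDerivAt_pow 2 x).const_mul 3)).add
      ((hasDerivAt_id x).const_mul 4)
    refine this.congr_deriv ?_
    norm_num
    ring
  rw [intervalIntegral.integral_eq_sub_of_hasDerivAt hderiv
    ((Continuous.intervalIntegrable (by continuity)) 0 2)]
  norm_num

-- ∫ over ℝ of kfun x * g x where g continuous, reduces to interval integral
lemma kfun_mul_integral (g : ℝ → ℝ) (hg : Continuous g) :
    ∫ x : ℝ, kfun x * g x =
      ∫ x in (-2:ℝ)..2, ((|x| ^ 3 - 6 * |x| + 4) / 6) * g x := by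
  have heq : (fun x : ℝ => kfun x * g x) =
      (Set.Icc (-2:ℝ) 2).indicator (fun x => ((|x| ^ 3 - 6 * |x| + 4) / 6) * g x) := by
    funext x
    by_cases h : |x| ≤ 2
    · rw [Set.indicator_of_mem (by rw [Set.mem_Icc]; exact abs_le.mp h), kfun, if_pos h]
    · rw [Set.indicator_of_notMem (by rw [Set.mem_Icc]; exact fun hm => h (abs_le.mpr hm)),
        kfun, if_neg h, zero_mul]
  rw [heq, MeasureTheory.integral_indicator measurableSet_Icc,
    MeasureTheory.integral_Icc_eq_integral_Ioc,
    ← intervalIntegral.integral_of_le (by norm_num : (-2:ℝ) ≤ 2)]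

lemma kfun_cos_integral (c : ℝ) :
    ∫ x : ℝ, kfun x * Real.cos (c * x) =
      (∫ x in (0:ℝ)..2, (x ^ 3 - 6 * x + 4) * Real.cos (c * x)) / 3 := by
  rw [kfun_mul_integral _ (by continuity)]
  have hsplit : ∫ x in (-2:ℝ)..2, ((|x| ^ 3 - 6 * |x| + 4) / 6) * Real.cos (c * x) =
      (∫ x in (-2:ℝ)..0, ((|x| ^ 3 - 6 * |x| + 4) / 6) * Real.cos (c * x)) +
      ∫ x in (0:ℝ)..2, ((|x| ^ 3 - 6 * |x| + 4) / 6) * Real.cos (c * x) := by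
    rw [intervalIntegral.integral_add_adjacent_intervals] <;>
      exact (Continuous.intervalIntegrable (by continuity)) _ _
  have hneg : ∫ x in (-2:ℝ)..0, ((|x| ^ 3 - 6 * |x| + 4) / 6) * Real.cos (c * x) =
      ∫ x in (0:ℝ)..2, ((|x| ^ 3 - 6 * |x| + 4) / 6) * Real.cos (c * x) := by
    have h1 := intervalIntegral.integral_comp_neg (a := (0:ℝ)) (b := 2)
      (fun x => ((|x| ^ 3 - 6 * |x| + 4) / 6) * Real.cos (c * x))
    simp only [abs_neg, mul_neg, Real.cos_neg, neg_zero] at h1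
    rw [← h1]
  have hpos : ∫ x in (0:ℝ)..2, ((|x| ^ 3 - 6 * |x| + 4) / 6) * Real.cos (c * x) =
      (∫ x in (0:ℝ)..2, (x ^ 3 - 6 * x + 4) * Real.cos (c * x)) / 6 := by
    rw [← intervalIntegral.integral_div]
    apply intervalIntegral.integral_congr
    intro x hx
    rw [Set.uIcc_of_le (by norm_num : (0:ℝ) ≤ 2), Set.mem_Icc] at hx
    simp only
    rw [_root_.abs_of_nonneg hx.1]
    ring
  rw [hsplit, hneg, hpos]
  ring

lemma kfun_sin_integral (c : ℝ) :
    ∫ x : ℝ, kfun x * Real.sin (c * x) = 0 := by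
  have h : ∫ x : ℝ, kfun x * Real.sin (c * x) = - ∫ x : ℝ, kfun x * Real.sin (c * x) := by
    conv_lhs => rw [← MeasureTheory.integral_neg_eq_self]
    rw [← MeasureTheory.integral_neg]
    congr 1
    funext x
    rw [kfun_even, mul_neg, Real.sin_neg, mul_neg]
  linarith

lemma hcos_integrable (c : ℝ) : Integrable (fun v : ℝ => kfun v * Real.cos (c * v)) := by
  exact (kfun_cont.mul (by continuity)).integrable_of_hasCompactSupport kfun_supp.mul_right

lemma hsin_integrable (c : ℝ) : Integrable (fun v : ℝ => kfun v * Real.sin (c * v)) := by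
  exact (kfun_cont.mul (by continuity)).integrable_of_hasCompactSupport kfun_supp.mul_right

lemma fourier_kC_eq (ξ : ℝ) :
    𝓕 (fun x : ℝ => (kfun x : ℂ)) ξ
      = ((∫ x : ℝ, kfun x * Real.cos (2 * π * ξ * x) : ℝ) : ℂ) := by
  rw [Real.fourier_real_eq_integral_exp_smul]
  have key : ∀ v : ℝ, Complex.exp (↑(-2 * π * v * ξ) * Complex.I) • ((kfun v : ℂ))
      = ((kfun v * Real.cos (2 * π * ξ * v) : ℝ) : ℂ)
        - ((kfun v * Real.sin (2 * π * ξ * v) : ℝ) : ℂ) * Complex.I := by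
    intro v
    rw [smul_eq_mul, Complex.exp_mul_I]
    rw [show ((-2 * π * v * ξ : ℝ) : ℂ) = -((2 * π * ξ * v : ℝ) : ℂ) by push_cast; ring]
    rw [Complex.cos_neg, Complex.sin_neg, ← Complex.ofReal_cos, ← Complex.ofReal_sin]
    push_cast
    ring
  simp_rw [key]
  have i1 : Integrable (fun v : ℝ => ((kfun v * Real.cos (2 * π * ξ * v) : ℝ) : ℂ)) :=
    (hcos_integrable (2 * π * ξ)).ofReal
  have i2 : Integrable (fun v : ℝ => ((kfun v * Real.sin (2 * π * ξ * v) : ℝ) : ℂ) * Complex.I) :=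
    ((hsin_integrable (2 * π * ξ)).ofReal).mul_const Complex.I
  rw [MeasureTheory.integral_sub i1 i2]
  have e3 : ∫ v : ℝ, ((kfun v * Real.sin (2 * π * ξ * v) : ℝ) : ℂ) * Complex.I
      = (∫ v : ℝ, ((kfun v * Real.sin (2 * π * ξ * v) : ℝ) : ℂ)) * Complex.I := by
    exact MeasureTheory.integral_mul_const Complex.I
      (fun v : ℝ => ((kfun v * Real.sin (2 * π * ξ * v) : ℝ) : ℂ))
  rw [e3]
  have e1 : ∫ v : ℝ, ((kfun v * Real.cos (2 * π * ξ * v) : ℝ) : ℂ)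
      = ((∫ v : ℝ, kfun v * Real.cos (2 * π * ξ * v) : ℝ) : ℂ) := integral_ofReal
  have e2 : ∫ v : ℝ, ((kfun v * Real.sin (2 * π * ξ * v) : ℝ) : ℂ)
      = ((∫ v : ℝ, kfun v * Real.sin (2 * π * ξ * v) : ℝ) : ℂ) := integral_ofReal
  rw [e1, e2, kfun_sin_integral]
  simp

lemma Vval (c : ℝ) (hc : c ≠ 0) :
    (6 * Real.cos (2 * c) / c ^ 2 - 12 * Real.sin (2 * c) / c ^ 3
      - 6 * Real.cos (2 * c) / c ^ 4 + 6 / c ^ 2 + 6 / c ^ 4) / 3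
    = 4 * ((Real.sin c - c * Real.cos c) ^ 2 / c ^ 4) := by
  have h := Real.sin_sq_add_cos_sq c
  have hnum : 4 * (Real.sin c - c * Real.cos c) ^ 2
      = 2 - 2 * (2 * Real.cos c ^ 2 - 1) - 4 * c * (2 * Real.sin c * Real.cos c)
        + 2 * c ^ 2 + 2 * c ^ 2 * (2 * Real.cos c ^ 2 - 1) := by
    linear_combination 4 * h
  rw [mul_div_assoc', hnum, Real.cos_two_mul, Real.sin_two_mul]
  field_simp
  ring

lemma fourier_kC_val (ξ : ℝ) :
    𝓕 (fun x : ℝ => (kfun x : ℂ)) ξ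
      = ((4 * ((Real.sin (2 * π * ξ) - (2 * π * ξ) * Real.cos (2 * π * ξ)) ^ 2
          / (2 * π * ξ) ^ 4) : ℝ) : ℂ) := by
  rw [fourier_kC_eq, kfun_cos_integral]
  rcases eq_or_ne ξ 0 with rfl | hξ
  · simp only [mul_zero, zero_mul, Real.cos_zero, mul_one, Real.sin_zero]
    rw [poly_int]
    norm_num
  · have hc : 2 * π * ξ ≠ 0 := mul_ne_zero (by positivity) hξ
    rw [cos_int _ hc, Vval _ hc]

lemma final_integral : ∫ s : ℝ, (Real.sin s - s * Real.cos s) ^ 2 / s ^ 4 = π / 3 := by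
  have hGint : Integrable (fun s : ℝ => (Real.sin s - s * Real.cos s) ^ 2 / s ^ 4) := by
    exact Gfun_integrable
  set G : ℝ → ℝ := fun s => (Real.sin s - s * Real.cos s) ^ 2 / s ^ 4 with hG
  have h2π : (2 * π : ℝ) ≠ 0 := by positivity
  have hGcomp : Integrable (fun ξ : ℝ => G (2 * π * ξ)) := hGint.comp_mul_left' h2π
  have hkC_cont : Continuous (fun x : ℝ => (kfun x : ℂ)) := Complex.continuous_ofReal.comp kfun_cont
  have hkC_int : Integrable (fun x : ℝ => (kfun x : ℂ)) :=
    hkC_cont.integrable_of_hasCompactSupport (kfun_supp.comp_left (g := Complex.ofReal) rfl)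
  have hFeq : 𝓕 (fun x : ℝ => (kfun x : ℂ))
      = fun ξ : ℝ => ((4 * G (2 * π * ξ) : ℝ) : ℂ) := funext fourier_kC_val
  have hFint : Integrable (𝓕 (fun x : ℝ => (kfun x : ℂ))) := by
    rw [hFeq]; exact (hGcomp.const_mul 4).ofReal
  have hinv := hkC_int.fourierInv_fourier_eq hFint (hkC_cont.continuousAt (x := 0))
  rw [Real.fourierInv_eq] at hinv
  simp only [inner_zero_right, AddChar.map_zero_eq_one, one_smul, neg_zero] at hinv
  rw [hFeq] at hinv
  have hof : (∫ ξ : ℝ, ((4 * G (2 * π * ξ) : ℝ) : ℂ))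
      = ((∫ ξ : ℝ, 4 * G (2 * π * ξ) : ℝ) : ℂ) := integral_ofReal
  rw [hof, kfun_zero] at hinv
  have hreal : ∫ ξ : ℝ, 4 * G (2 * π * ξ) = 2 / 3 := by exact_mod_cast hinv
  rw [MeasureTheory.integral_const_mul, MeasureTheory.Measure.integral_comp_mul_left G (2 * π)] at hreal
  rw [abs_of_pos (by positivity : (0:ℝ) < (2*π)⁻¹), smul_eq_mul] at hreal
  have hπ : (0:ℝ) < π := Real.pi_pos
  field_simp at hreal
  linarith

theorem integral_sin_sub_mul_cos_sq_div_pow_four :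
    Integrable (fun s : ℝ => (Real.sin s - s * Real.cos s) ^ 2 / s ^ 4) volume ∧
    (∫ s : ℝ, (Real.sin s - s * Real.cos s) ^ 2 / s ^ 4) = π / 3 ∧
    2 * π * ∫ s : ℝ, (Real.sin s - s * Real.cos s) ^ 2 / s ^ 4 = 2 * π ^ 2 / 3 := by
  refine ⟨Gfun_integrable, final_integral, ?_⟩
  rw [final_integral]
  ring
end
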